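/- arXiv:2208.13263 — 9 statements merged into one kernel-verified Lean document; each statement's English description precedes it below -/
import Mathlib

section
/- For every power of two q, the integer 2q^2+3 does not divide q^4(q^4-1)(q^2-1). -/
theorem stmt_0 (f : ℕ) (hf : 0 < f) (q : ℕ) (hq : q = 2 ^ f) :
    ¬ (2 * q ^ 2 + 3 ∣ q ^ 4 * (q ^ 4 - 1) * (q ^ 2 - 1)) := by
  intro h
  have hq2 : 2 ≤ q := by
    subst hq
    calc 2 = 2 ^ 1 := rfl
    _ ≤ 2 ^ f := Nat.pow_le_pow_right (by norm_num) hf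
  have h1 : 1 ≤ q ^ 2 := Nat.one_le_pow _ _ (by omega)
  have h2 : 1 ≤ q ^ 4 := Nat.one_le_pow _ _ (by omega)
  have hz : ((2 * q ^ 2 + 3 : ℕ) : ℤ) ∣ (q : ℤ) ^ 4 * ((q : ℤ) ^ 4 - 1) * ((q : ℤ) ^ 2 - 1) := by
    have h' := Int.natCast_dvd_natCast.mpr h
    push_cast [h1, h2] at h'
    exact h'
  have h225 : ((2 * q ^ 2 + 3 : ℕ) : ℤ) ∣ 225 := by
    have h32 : ((2 * q ^ 2 + 3 : ℕ) : ℤ) ∣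
        32 * ((q : ℤ) ^ 4 * ((q : ℤ) ^ 4 - 1) * ((q : ℤ) ^ 2 - 1)) := hz.mul_left 32
    have hm : ((2 * q ^ 2 + 3 : ℕ) : ℤ) ∣
        ((2 * q ^ 2 + 3 : ℕ) : ℤ) * (16 * (q:ℤ)^8 - 40 * (q:ℤ)^6 + 44 * (q:ℤ)^4 - 50 * (q:ℤ)^2 + 75) :=
      Dvd.intro _ rfl
    have key : (225 : ℤ) =
        ((2 * q ^ 2 + 3 : ℕ) : ℤ) * (16 * (q:ℤ)^8 - 40 * (q:ℤ)^6 + 44 * (q:ℤ)^4 - 50 * (q:ℤ)^2 + 75)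
        - 32 * ((q : ℤ) ^ 4 * ((q : ℤ) ^ 4 - 1) * ((q : ℤ) ^ 2 - 1)) := by
      push_cast; ring
    rw [key]
    exact dvd_sub hm h32
  have hn : 2 * q ^ 2 + 3 ∣ 225 := by exact_mod_cast h225
  have hle : 2 * q ^ 2 + 3 ≤ 225 := Nat.le_of_dvd (by norm_num) hn
  subst hq
  have hf3 : f ≤ 3 := by
    by_contra hc
    push_neg at hc
    have : 2 ^ 4 ≤ 2 ^ f := Nat.pow_le_pow_right (by norm_num) hc
    nlinarith [sq_nonneg (2 ^ f)]
  interval_cases f <;> revert hn <;> decide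
end

section
/- If q is a power of 2 and q^2+2 divides q^4(q^4-1)(q^2-1), then q = 2 or q = 4. -/
theorem stmt_1 (f : ℕ) (hf : 0 < f) (q : ℕ) (hq : q = 2 ^ f)
    (h : q ^ 2 + 2 ∣ q ^ 4 * (q ^ 4 - 1) * (q ^ 2 - 1)) :
    q = 2 ∨ q = 4 := by
  have hq2 : 2 ≤ q := by
    subst hq
    calc 2 = 2 ^ 1 := rfl
    _ ≤ 2 ^ f := Nat.pow_le_pow_right (by norm_num) hf
  have h1 : 1 ≤ q ^ 2 := Nat.one_le_pow _ _ (by omega)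
  have h4 : 1 ≤ q ^ 4 := Nat.one_le_pow _ _ (by omega)
  -- move to ℤ
  have hz : ((q : ℤ) ^ 2 + 2) ∣ ((q : ℤ) ^ 4 * ((q : ℤ) ^ 4 - 1) * ((q : ℤ) ^ 2 - 1)) := by
    have := Int.natCast_dvd_natCast.mpr h
    push_cast [Nat.cast_sub h1, Nat.cast_sub h4] at this
    convert this using 2 <;> push_cast <;> ring
  have h36 : ((q : ℤ) ^ 2 + 2) ∣ 36 := by
    have key : (36 : ℤ) = ((q : ℤ) ^ 2 + 2) * ((q:ℤ)^8 - 3*(q:ℤ)^6 + 5*(q:ℤ)^4 - 9*(q:ℤ)^2 + 18)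
        - (q : ℤ) ^ 4 * ((q : ℤ) ^ 4 - 1) * ((q : ℤ) ^ 2 - 1) := by ring
    rw [key]
    exact dvd_sub (Dvd.intro _ rfl) hz
  have hn : q ^ 2 + 2 ∣ 36 := by
    have := Int.ofNat_dvd.mp (by push_cast; exact h36)
    exact this
  have hle : q ^ 2 + 2 ≤ 36 := Nat.le_of_dvd (by norm_num) hn
  have hfle : f ≤ 2 := by
    by_contra hc
    push_neg at hc
    have : 2 ^ 3 ≤ 2 ^ f := Nat.pow_le_pow_right (by norm_num) hc
    subst hq
    nlinarith [this]
  interval_cases f <;> subst hq <;> norm_num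
end

section
/- If q is a power of 2 and 2q^2+1 divides q^4(q^4-1)(q^2-1), then q = 2. -/
theorem stmt_2 (f : ℕ) (hf : 0 < f) (q : ℕ) (hq : q = 2 ^ f)
    (h : 2 * q ^ 2 + 1 ∣ q ^ 4 * (q ^ 4 - 1) * (q ^ 2 - 1)) :
    q = 2 := by
  have hq2 : 2 ≤ q := by
    subst hq
    calc 2 = 2 ^ 1 := rfl
    _ ≤ 2 ^ f := Nat.pow_le_pow_right (by norm_num) hf
  -- n is coprime to q^4
  have hodd : Odd (2 * q ^ 2 + 1) := ⟨q ^ 2, by ring⟩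
  have hcop2 : Nat.Coprime (2 * q ^ 2 + 1) 2 := by
    exact Nat.coprime_two_right.mpr hodd
  have hcopq : Nat.Coprime (2 * q ^ 2 + 1) q := by
    have := hcop2.pow_right f; rwa [← hq] at this
  have hcop : Nat.Coprime (2 * q ^ 2 + 1) (q ^ 4) := hcopq.pow_right 4
  have h2 : 2 * q ^ 2 + 1 ∣ (q ^ 4 - 1) * (q ^ 2 - 1) := by
    have := (Nat.Coprime.dvd_of_dvd_mul_left hcop
      (by rwa [← mul_assoc] : 2 * q ^ 2 + 1 ∣ q ^ 4 * ((q ^ 4 - 1) * (q ^ 2 - 1))))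
    exact this
  -- move to ℤ
  have h4 : (1 : ℕ) ≤ q ^ 4 := Nat.one_le_pow _ _ (by omega)
  have h5 : (1 : ℕ) ≤ q ^ 2 := Nat.one_le_pow _ _ (by omega)
  have hz : ((2 * q ^ 2 + 1 : ℕ) : ℤ) ∣ ((q : ℤ) ^ 4 - 1) * ((q : ℤ) ^ 2 - 1) := by
    have := Int.natCast_dvd_natCast.mpr h2
    push_cast [Nat.cast_sub h4, Nat.cast_sub h5] at this ⊢
    convert this using 2
  have h9 : ((2 * q ^ 2 + 1 : ℕ) : ℤ) ∣ 9 := by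
    obtain ⟨c, hc⟩ := hz
    refine ⟨8 * c - (4 * (q : ℤ) ^ 4 - 6 * q ^ 2 - 1), ?_⟩
    push_cast
    have : ((q:ℤ) ^ 4 - 1) * ((q:ℤ) ^ 2 - 1) = (2 * (q:ℤ) ^ 2 + 1) * c := by
      push_cast at hc; linarith [hc]
    nlinarith [this]
  have h9n : 2 * q ^ 2 + 1 ∣ 9 := by exact_mod_cast h9
  have := Nat.le_of_dvd (by norm_num) h9n
  nlinarith
end

section
/- If q is a power of 2 and 3q^2+2 divides q^4(q^4-1)(q^2-1), then q = 4. -/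
theorem stmt_3 (f : ℕ) (hf : 0 < f) (q : ℕ) (hq : q = 2 ^ f)
    (h : 3 * q ^ 2 + 2 ∣ q ^ 4 * (q ^ 4 - 1) * (q ^ 2 - 1)) :
    q = 4 := by
  have hq2 : 2 ≤ q := by
    rw [hq]
    calc 2 = 2 ^ 1 := rfl
    _ ≤ 2 ^ f := Nat.pow_le_pow_right (by norm_num) hf
  -- cast to ℤ
  have h1 : (1:ℕ) ≤ q ^ 4 := Nat.one_le_pow _ _ (by omega)
  have h2 : (1:ℕ) ≤ q ^ 2 := Nat.one_le_pow _ _ (by omega)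
  have hz : ((3 * q ^ 2 + 2 : ℕ) : ℤ) ∣ ((q:ℤ) ^ 4 * ((q:ℤ) ^ 4 - 1) * ((q:ℤ) ^ 2 - 1)) := by
    have := Int.natCast_dvd_natCast.mpr h
    push_cast [h1, h2] at this
    convert this using 2 <;> push_cast <;> ring
  have key : ((3 * q ^ 2 + 2 : ℕ) : ℤ) ∣ 100 := by
    have hpoly : ((3 * q ^ 2 + 2 : ℕ) : ℤ) ∣
        243 * ((q:ℤ) ^ 4 * ((q:ℤ) ^ 4 - 1) * ((q:ℤ) ^ 2 - 1)) - 100 := by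
      refine ⟨81 * (q:ℤ)^8 - 135 * (q:ℤ)^6 + 9 * (q:ℤ)^4 + 75 * (q:ℤ)^2 - 50, ?_⟩
      push_cast
      ring
    have := dvd_sub (Dvd.dvd.mul_left hz 243) hpoly
    simpa using this
  have h100 : 3 * q ^ 2 + 2 ∣ 100 := by exact_mod_cast key
  have hle : 3 * q ^ 2 + 2 ≤ 100 := Nat.le_of_dvd (by norm_num) h100
  have hqle : q ≤ 5 := by nlinarith
  have heven : 2 ∣ 2 ^ f := dvd_pow_self 2 hf.ne'
  interval_cases q
  · norm_num at h100
  · omega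
  · rfl
  · omega
end

section
/- For every power of two q > 2, the integer q^4-9 does not divide q^4(q^4-1)(q^2-1). -/
theorem stmt_4 (f : ℕ) (hf : 2 ≤ f) (q : ℕ) (hq : q = 2 ^ f) :
    ¬ (q ^ 4 - 9 ∣ q ^ 4 * (q ^ 4 - 1) * (q ^ 2 - 1)) := by
  intro h
  rcases eq_or_lt_of_le hf with hf2 | hf3
  · subst hq; rw [← hf2] at h; norm_num at h
  · have hq8 : 8 ≤ q := by
      subst hq
      calc (8:ℕ) = 2 ^ 3 := by norm_num
      _ ≤ 2 ^ f := Nat.pow_le_pow_right (by norm_num) hf3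
    have h9 : 9 ≤ q ^ 4 := le_trans (by norm_num) (Nat.pow_le_pow_left hq8 4)
    have h1 : 1 ≤ q ^ 4 := by omega
    have h2 : 1 ≤ q ^ 2 := le_trans (by norm_num) (Nat.pow_le_pow_left hq8 2)
    have hz : ((q:ℤ) ^ 4 - 9) ∣ (q:ℤ) ^ 4 * ((q:ℤ) ^ 4 - 1) * ((q:ℤ) ^ 2 - 1) := by
      have hc := Int.natCast_dvd_natCast.mpr h
      push_cast [Nat.cast_sub h9, Nat.cast_sub h1, Nat.cast_sub h2] at hc
      convert hc using 2 <;> push_cast <;> ring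
    have hd : ((q:ℤ) ^ 4 - 9) ∣
        (q:ℤ) ^ 4 * ((q:ℤ) ^ 4 - 1) * ((q:ℤ) ^ 2 - 1) * ((q:ℤ) ^ 2 + 1) :=
      hz.mul_right _
    have h576 : ((q:ℤ) ^ 4 - 9) ∣ 576 := by
      have key : (576:ℤ) = (q:ℤ) ^ 4 * ((q:ℤ) ^ 4 - 1) * ((q:ℤ) ^ 2 - 1) * ((q:ℤ) ^ 2 + 1)
          - ((q:ℤ) ^ 4 - 9) * ((q:ℤ) ^ 8 + 7 * (q:ℤ) ^ 4 + 64) := by ring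
      rw [key]
      exact dvd_sub hd (dvd_mul_right _ _)
    have hle := Int.le_of_dvd (by norm_num) h576
    have : (8:ℤ) ≤ (q:ℤ) := by exact_mod_cast hq8
    have h4 : (4096:ℤ) ≤ (q:ℤ) ^ 4 :=
      le_trans (by norm_num) (pow_le_pow_left₀ (by norm_num) this 4)
    linarith
end

section
/- For a finite group G and a positive integer n dividing |G|, n divides the number of elements x in G with x^n = 1. -/
open Finset Subgroup MulAction

attribute [local instance 10] Classical.propDecidable

universe u

private lemma zpowersIsCyclic {G : Type u} [Group G] (x : G) :
    IsCyclic ↥(Subgroup.zpowers x) := by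
  refine ⟨⟨⟨x, Subgroup.mem_zpowers x⟩, ?_⟩⟩
  rintro ⟨y, hy⟩
  obtain ⟨k, hk⟩ := Subgroup.mem_zpowers_iff.mp hy
  refine Subgroup.mem_zpowers_iff.mpr ⟨k, ?_⟩
  ext
  simpa using hk

private lemma conjPow {G : Type u} [Group G] (a b : G) (n : ℕ) :
    (a * b * a⁻¹) ^ n = a * b ^ n * a⁻¹ := by
  induction n with
  | zero => simp
  | succ n ih => rw [pow_succ, pow_succ, ih]; group

/-- Arithmetic helper: if `n2 ∣ K * c` then `n2 ∣ K * gcd n2 c`. -/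
private lemma arith_helper {n2 K c : ℕ} (hc : 0 < c) (h : n2 ∣ K * c) :
    n2 ∣ K * Nat.gcd n2 c := by
  have hd0 : 0 < Nat.gcd n2 c := Nat.pos_of_ne_zero fun hz =>
    absurd (Nat.eq_zero_of_gcd_eq_zero_right hz) hc.ne'
  have h6 : (n2 / Nat.gcd n2 c) * Nat.gcd n2 c ∣ (K * (c / Nat.gcd n2 c)) * Nat.gcd n2 c := by
    rw [Nat.div_mul_cancel (Nat.gcd_dvd_left n2 c), mul_assoc,
      Nat.div_mul_cancel (Nat.gcd_dvd_right n2 c)]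
    exact h
  have h7 : n2 / Nat.gcd n2 c ∣ K * (c / Nat.gcd n2 c) :=
    (Nat.mul_dvd_mul_iff_right hd0).mp h6
  have h8 : Nat.Coprime (n2 / Nat.gcd n2 c) (c / Nat.gcd n2 c) :=
    Nat.coprime_div_gcd_div_gcd hd0
  have h9 : n2 / Nat.gcd n2 c ∣ K := h8.dvd_of_dvd_mul_right h7
  calc n2 = (n2 / Nat.gcd n2 c) * Nat.gcd n2 c :=
        (Nat.div_mul_cancel (Nat.gcd_dvd_left n2 c)).symm
    _ ∣ K * Nat.gcd n2 c := mul_dvd_mul h9 dvd_rfl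

section Main

variable (G : Type u) [Group G] [Fintype G]

/-- The key splitting congruence: counting solutions of `x ^ (n1 * n2) = 1` via commuting
pairs and conjugacy classes, modulo `n2`. -/
private lemma lemS
    (IH : ∀ H : Subgroup G, H ≠ ⊤ → ∀ k : ℕ, 0 < k → k ∣ Fintype.card ↥H →
      k ∣ (univ.filter fun x : ↥H => x ^ k = 1).card)
    (n1 n2 : ℕ) (h1 : 0 < n1) (h2 : 0 < n2) (h12 : Nat.Coprime n1 n2)
    (hn2 : n2 ∣ Fintype.card G) :
    (univ.filter fun x : G => x ^ (n1 * n2) = 1).card ≡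
      ((univ.filter fun u : G => u ^ n1 = 1 ∧ u ∈ center G).card *
        (univ.filter fun x : G => x ^ n2 = 1).card) [MOD n2] := by
  classical
  set T : G → ℕ :=
    fun u => (univ.filter fun v : G => v ∈ centralizer {u} ∧ v ^ n2 = 1).card with hTdef
  obtain ⟨k1, hk11, hk12⟩ := Nat.chineseRemainder h12 1 0
  obtain ⟨k2, hk21, hk22⟩ := Nat.chineseRemainder h12 0 1
  have hn2k1 : n2 ∣ k1 := (Nat.modEq_zero_iff_dvd).mp hk12
  have hn1k2 : n1 ∣ k2 := (Nat.modEq_zero_iff_dvd).mp hk21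
  -- Step 1: the count of solutions equals the sum of T over n1-torsion elements
  have step1 : (univ.filter fun x : G => x ^ (n1 * n2) = 1).card
      = ∑ u ∈ univ.filter (fun u : G => u ^ n1 = 1), T u := by
    set s : Finset (G × G) :=
      univ.filter fun q : G × G => q.1 ^ n1 = 1 ∧ q.2 ∈ centralizer {q.1} ∧ q.2 ^ n2 = 1
      with hs
    have hbij : (univ.filter fun x : G => x ^ (n1 * n2) = 1).card = s.card := by
      apply Finset.card_nbij' (i := fun x => (x ^ k1, x ^ k2)) (j := fun q => q.1 * q.2)
      · intro x hx
        simp only [mem_coe, mem_filter, mem_univ, true_and] at hx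
        have hofx : orderOf x ∣ n1 * n2 := orderOf_dvd_of_pow_eq_one hx
        simp only [hs, mem_coe, mem_filter, mem_univ, true_and]
        refine ⟨?_, ?_, ?_⟩
        · rw [← pow_mul]
          refine orderOf_dvd_iff_pow_eq_one.mp (hofx.trans ?_)
          obtain ⟨c, rfl⟩ := hn2k1
          exact ⟨c, by ring⟩
        · refine Subgroup.mem_centralizer_singleton_iff.mpr ?_
          rw [← pow_add, ← pow_add, add_comm]
        · rw [← pow_mul]
          refine orderOf_dvd_iff_pow_eq_one.mp (hofx.trans ?_)
          obtain ⟨c, rfl⟩ := hn1k2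
          exact ⟨c, by ring⟩
      · intro q hq
        simp only [hs, mem_coe, mem_filter, mem_univ, true_and] at hq
        obtain ⟨hq1, hq2, hq3⟩ := hq
        have hcomm : Commute q.1 q.2 := (Subgroup.mem_centralizer_singleton_iff.mp hq2).symm
        simp only [mem_coe, mem_filter, mem_univ, true_and]
        rw [hcomm.mul_pow, pow_mul, hq1, one_pow, one_mul, mul_comm n1 n2, pow_mul, hq3,
          one_pow]
      · intro x hx
        simp only [mem_coe, mem_filter, mem_univ, true_and] at hx
        have hofx : orderOf x ∣ n1 * n2 := orderOf_dvd_of_pow_eq_one hx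
        have hmod : k1 + k2 ≡ 1 [MOD n1 * n2] := by
          refine (Nat.modEq_and_modEq_iff_modEq_mul h12).mp ⟨?_, ?_⟩
          · simpa using hk11.add hk21
          · simpa using hk12.add hk22
        dsimp only
        rw [← pow_add]
        calc x ^ (k1 + k2) = x ^ 1 := pow_eq_pow_iff_modEq.mpr (hmod.of_dvd hofx)
          _ = x := pow_one x
      · intro q hq
        simp only [hs, mem_coe, mem_filter, mem_univ, true_and] at hq
        obtain ⟨hq1, hq2, hq3⟩ := hq
        have hcomm : Commute q.1 q.2 := (Subgroup.mem_centralizer_singleton_iff.mp hq2).symm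
        have ho1 : orderOf q.1 ∣ n1 := orderOf_dvd_of_pow_eq_one hq1
        have ho2 : orderOf q.2 ∣ n2 := orderOf_dvd_of_pow_eq_one hq3
        have e1 : (q.1 * q.2) ^ k1 = q.1 := by
          rw [hcomm.mul_pow]
          have hz : q.2 ^ k1 = 1 := orderOf_dvd_iff_pow_eq_one.mp (ho2.trans hn2k1)
          have ho : q.1 ^ k1 = q.1 ^ 1 := pow_eq_pow_iff_modEq.mpr (hk11.of_dvd ho1)
          rw [hz, mul_one, ho, pow_one]
        have e2 : (q.1 * q.2) ^ k2 = q.2 := by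
          rw [hcomm.mul_pow]
          have hz : q.1 ^ k2 = 1 := orderOf_dvd_iff_pow_eq_one.mp (ho1.trans hn1k2)
          have ho : q.2 ^ k2 = q.2 ^ 1 := pow_eq_pow_iff_modEq.mpr (hk22.of_dvd ho2)
          rw [hz, one_mul, ho, pow_one]
        exact Prod.ext e1 e2
    have hfib : s.card = ∑ u ∈ univ.filter (fun u : G => u ^ n1 = 1),
        (s.filter fun q => q.1 = u).card := by
      apply Finset.card_eq_sum_card_fiberwise (f := Prod.fst)
      intro q hq
      simp only [hs, mem_coe, mem_filter, mem_univ, true_and] at hq ⊢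
      exact hq.1
    have hinner : ∀ u ∈ univ.filter (fun u : G => u ^ n1 = 1),
        (s.filter fun q => q.1 = u).card = T u := by
      intro u hu
      simp only [mem_filter, mem_univ, true_and] at hu
      rw [hTdef]
      apply Finset.card_nbij' (i := Prod.snd) (j := fun v => (u, v))
      · intro q hq
        simp only [hs, mem_coe, mem_filter, mem_univ, true_and] at hq ⊢
        obtain ⟨⟨hq1, hq2, hq3⟩, hq4⟩ := hq
        rw [← hq4]
        exact ⟨hq2, hq3⟩
      · intro v hv
        simp only [mem_coe, mem_filter, mem_univ, true_and] at hv
        simp only [hs, mem_coe, mem_filter, mem_univ, true_and]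
        exact ⟨⟨hu, hv.1, hv.2⟩, trivial⟩
      · intro q hq
        simp only [hs, mem_coe, mem_filter, mem_univ, true_and] at hq
        exact Prod.ext hq.2.symm rfl
      · intro v _
        rfl
    rw [hbij, hfib]
    exact Finset.sum_congr rfl hinner
  -- conjugation invariance of T
  have Tconj : ∀ (cc w : G), T (cc * w * cc⁻¹) = T w := by
    intro cc w
    simp only [hTdef]
    apply Finset.card_nbij' (i := fun v => cc⁻¹ * v * cc) (j := fun v => cc * v * cc⁻¹)
    · intro v hv
      simp only [mem_coe, mem_filter, mem_univ, true_and,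
        Subgroup.mem_centralizer_singleton_iff] at hv ⊢
      obtain ⟨hv1, hv2⟩ := hv
      constructor
      · calc cc⁻¹ * v * cc * w = cc⁻¹ * (v * (cc * w * cc⁻¹)) * cc := by group
          _ = cc⁻¹ * ((cc * w * cc⁻¹) * v) * cc := by rw [hv1]
          _ = w * (cc⁻¹ * v * cc) := by group
      · have : (cc⁻¹ * v * cc) ^ n2 = cc⁻¹ * v ^ n2 * cc := by
          have := conjPow cc⁻¹ v n2
          simpa using this
        rw [this, hv2]
        group
    · intro v hv
      simp only [mem_coe, mem_filter, mem_univ, true_and,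
        Subgroup.mem_centralizer_singleton_iff] at hv ⊢
      obtain ⟨hv1, hv2⟩ := hv
      constructor
      · calc cc * v * cc⁻¹ * (cc * w * cc⁻¹) = cc * (v * w) * cc⁻¹ := by group
          _ = cc * (w * v) * cc⁻¹ := by rw [hv1]
          _ = cc * w * cc⁻¹ * (cc * v * cc⁻¹) := by group
      · rw [conjPow, hv2]
        group
    · intro v _
      group
    · intro v _
      group
  -- split the sum into central and noncentral parts
  have hsplitsum :
      ∑ u ∈ (univ.filter (fun u : G => u ^ n1 = 1)).filter (fun u => u ∈ center G), T u +
      ∑ u ∈ (univ.filter (fun u : G => u ^ n1 = 1)).filter (fun u => ¬ u ∈ center G), T u =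
      ∑ u ∈ univ.filter (fun u : G => u ^ n1 = 1), T u :=
    Finset.sum_filter_add_sum_filter_not _ _ T
  -- central part
  have hcen : ∑ u ∈ (univ.filter (fun u : G => u ^ n1 = 1)).filter (fun u => u ∈ center G), T u
      = (univ.filter fun u : G => u ^ n1 = 1 ∧ u ∈ center G).card *
        (univ.filter fun x : G => x ^ n2 = 1).card := by
    have hTc : ∀ u ∈ (univ.filter (fun u : G => u ^ n1 = 1)).filter (fun u => u ∈ center G),
        T u = (univ.filter fun x : G => x ^ n2 = 1).card := by
      intro u hu
      simp only [mem_filter, mem_univ, true_and] at hu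
      simp only [hTdef]
      congr 1
      apply Finset.filter_congr
      intro v _
      simp only [Subgroup.mem_centralizer_singleton_iff]
      have hcomm : v * u = u * v := Subgroup.mem_center_iff.mp hu.2 v
      simp [hcomm]
    have hAcard : ((univ.filter (fun u : G => u ^ n1 = 1)).filter
        (fun u => u ∈ center G)).card
        = (univ.filter fun u : G => u ^ n1 = 1 ∧ u ∈ center G).card := by
      refine Finset.card_nbij id ?_ ?_ ?_
      · intro a ha
        simp only [mem_coe, mem_filter, mem_univ, true_and, id] at ha ⊢
        exact ⟨ha.1, ha.2⟩
      · intro a _ b _ h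
        exact h
      · intro a ha
        simp only [mem_coe, mem_filter, mem_univ, true_and] at ha
        refine ⟨a, ?_, rfl⟩
        simp only [mem_coe, mem_filter, mem_univ, true_and]
        exact ⟨ha.1, ha.2⟩
    rw [Finset.sum_congr rfl hTc, Finset.sum_const, smul_eq_mul, hAcard]
  -- noncentral part
  have hnc : n2 ∣ ∑ u ∈ (univ.filter (fun u : G => u ^ n1 = 1)).filter
      (fun u => ¬ u ∈ center G), T u := by
    haveI : Fintype (ConjClasses G) := Fintype.ofFinite _
    rw [← Finset.sum_fiberwise_of_maps_to (g := fun u : G => ConjClasses.mk u)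
      (t := (univ : Finset (ConjClasses G))) (fun x _ => mem_univ _) T]
    apply Finset.dvd_sum
    intro q _
    rcases (((univ.filter (fun u : G => u ^ n1 = 1)).filter (fun u => ¬ u ∈ center G)).filter
        fun u => ConjClasses.mk u = q).eq_empty_or_nonempty with he | hne
    · rw [he]
      simp
    · obtain ⟨u0, hu0⟩ := hne
      simp only [mem_filter, mem_univ, true_and] at hu0
      obtain ⟨⟨hu01, hu02⟩, hu03⟩ := hu0
      have hclass : (((univ.filter (fun u : G => u ^ n1 = 1)).filter
          (fun u => ¬ u ∈ center G)).filter fun u => ConjClasses.mk u = q)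
          = univ.filter (fun y : G => IsConj u0 y) := by
        ext y
        simp only [mem_filter, mem_univ, true_and]
        constructor
        · rintro ⟨⟨hy1, hy2⟩, hy3⟩
          exact ConjClasses.mk_eq_mk_iff_isConj.mp (hu03.trans hy3.symm)
        · intro hy
          obtain ⟨cc, hcc⟩ := isConj_iff.mp hy
          refine ⟨⟨?_, ?_⟩, ?_⟩
          · rw [← hcc, conjPow, hu01]
            group
          · intro hyc
            apply hu02
            have h1' : u0 = cc⁻¹ * y * cc := by rw [← hcc]; group
            have h2' : cc⁻¹ * y * cc = y := by
              have hcm : cc * y = y * cc := Subgroup.mem_center_iff.mp hyc cc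
              calc cc⁻¹ * y * cc = cc⁻¹ * (y * cc) := by group
                _ = cc⁻¹ * (cc * y) := by rw [← hcm]
                _ = y := by group
            rw [h1', h2']
            exact hyc
          · rw [← hu03]
            exact ConjClasses.mk_eq_mk_iff_isConj.mpr hy.symm
      rw [hclass]
      have hconst : ∀ y ∈ univ.filter (fun y : G => IsConj u0 y), T y = T u0 := by
        intro y hy
        simp only [mem_filter, mem_univ, true_and] at hy
        obtain ⟨cc, hcc⟩ := isConj_iff.mp hy
        rw [← hcc, Tconj]
      rw [Finset.sum_congr rfl hconst, Finset.sum_const, smul_eq_mul]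
      -- now show n2 ∣ class size * T u0
      have hne2 : centralizer ({u0} : Set G) ≠ ⊤ := by
        intro htop
        apply hu02
        rw [Subgroup.mem_center_iff]
        intro g
        have hg : g ∈ centralizer ({u0} : Set G) := by rw [htop]; exact Subgroup.mem_top g
        exact Subgroup.mem_centralizer_singleton_iff.mp hg
      -- orbit–stabilizer
      have horb : (univ.filter (fun y : G => IsConj u0 y)).card *
          Fintype.card ↥(centralizer ({u0} : Set G)) = Fintype.card G := by
        have hos := MulAction.card_orbit_mul_card_stabilizer_eq_card_group (ConjAct G) u0
        have e1 : (univ.filter (fun y : G => IsConj u0 y)).card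
            = Fintype.card (MulAction.orbit (ConjAct G) u0) := by
          rw [eq_comm]
          apply Fintype.card_of_subtype
          intro y
          simp only [mem_filter, mem_univ, true_and]
          rw [ConjAct.mem_orbit_conjAct]
          exact isConj_comm
        have e2 : Fintype.card ↥(centralizer ({u0} : Set G))
            = Fintype.card (MulAction.stabilizer (ConjAct G) u0) := by
          apply Fintype.card_congr
          refine ⟨fun x => ⟨ConjAct.toConjAct (x : G), ?_⟩,
            fun y => ⟨ConjAct.ofConjAct (y : ConjAct G), ?_⟩,
            fun x => Subtype.ext (by simp), fun y => Subtype.ext (by simp)⟩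
          · have hx : (x : G) ∈ Subgroup.comap (ConjAct.toConjAct : G ≃* ConjAct G).toMonoidHom
                (MulAction.stabilizer (ConjAct G) u0) := by
              exact (Subgroup.centralizer_eq_comap_stabilizer u0).le x.2
            exact Subgroup.mem_comap.mp hx
          · have hy2 : ConjAct.toConjAct (ConjAct.ofConjAct (y : ConjAct G)) ∈
                MulAction.stabilizer (ConjAct G) u0 := by simpa using y.2
            have hmem : ConjAct.ofConjAct (y : ConjAct G) ∈
                Subgroup.comap (ConjAct.toConjAct : G ≃* ConjAct G).toMonoidHom
                  (MulAction.stabilizer (ConjAct G) u0) :=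
              Subgroup.mem_comap.mpr hy2
            exact (Subgroup.centralizer_eq_comap_stabilizer u0).ge hmem
        rw [e1, e2, hos]
        rfl
      -- IH gives divisibility of T u0 by the gcd
      have hTu0 : T u0 = (univ.filter fun v : ↥(centralizer ({u0} : Set G)) =>
          v ^ n2 = 1).card := by
        simp only [hTdef]
        rw [eq_comm]
        refine Finset.card_bij
          (fun (v : ↥(centralizer ({u0} : Set G))) _ => (v : G)) ?_ ?_ ?_
        · intro v hv
          simp only [mem_filter, mem_univ, true_and] at hv ⊢
          refine ⟨v.2, ?_⟩
          rw [← SubmonoidClass.coe_pow, hv, OneMemClass.coe_one]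
        · intro v1 h1' v2 h2' h
          exact Subtype.ext h
        · intro w hw
          simp only [mem_filter, mem_univ, true_and] at hw
          refine ⟨⟨w, hw.1⟩, ?_, rfl⟩
          simp only [mem_filter, mem_univ, true_and]
          exact Subtype.ext (by rw [SubmonoidClass.coe_pow, OneMemClass.coe_one]; exact hw.2)
      have hdT : Nat.gcd n2 (Fintype.card ↥(centralizer ({u0} : Set G))) ∣ T u0 := by
        rw [hTu0]
        have hgcdpos : 0 < Nat.gcd n2 (Fintype.card ↥(centralizer ({u0} : Set G))) :=
          Nat.pos_of_ne_zero fun hz =>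
            absurd (Nat.eq_zero_of_gcd_eq_zero_left hz) h2.ne'
        have hIH := IH (centralizer ({u0} : Set G)) hne2
          (Nat.gcd n2 (Fintype.card ↥(centralizer ({u0} : Set G)))) hgcdpos
          (Nat.gcd_dvd_right _ _)
        have hfeq : (univ.filter fun v : ↥(centralizer ({u0} : Set G)) => v ^ n2 = 1)
            = (univ.filter fun v : ↥(centralizer ({u0} : Set G)) =>
              v ^ Nat.gcd n2 (Fintype.card ↥(centralizer ({u0} : Set G))) = 1) := by
          apply Finset.filter_congr
          intro v _
          rw [pow_gcd_eq_one]; simp [pow_card_eq_one]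
        rw [hfeq]
        exact hIH
      have h5 : n2 ∣ (univ.filter (fun y : G => IsConj u0 y)).card *
          Fintype.card ↥(centralizer ({u0} : Set G)) := by
        rw [horb]
        exact hn2
      exact (arith_helper Fintype.card_pos h5).trans (mul_dvd_mul_left _ hdT)
  -- assemble
  rw [step1, ← hsplitsum, hcen]
  have hzero : (∑ u ∈ (univ.filter (fun u : G => u ^ n1 = 1)).filter
      (fun u => ¬ u ∈ center G), T u) ≡ 0 [MOD n2] := (Nat.modEq_zero_iff_dvd).mpr hnc
  simpa using (Nat.ModEq.add_left
    ((univ.filter fun u : G => u ^ n1 = 1 ∧ u ∈ center G).card *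
      (univ.filter fun x : G => x ^ n2 = 1).card) hzero)

/-- The full prime-power part of `|G|`. -/
private lemma step3
    (IH : ∀ H : Subgroup G, H ≠ ⊤ → ∀ k : ℕ, 0 < k → k ∣ Fintype.card ↥H →
      k ∣ (univ.filter fun x : ↥H => x ^ k = 1).card)
    (p : ℕ) (hp : p.Prime) :
    p ^ (Fintype.card G).factorization p ∣
      (univ.filter fun x : G =>
        x ^ (p ^ (Fintype.card G).factorization p) = 1).card := by
  classical
  have hg0 : Fintype.card G ≠ 0 := Fintype.card_ne_zero
  have hmul : (Fintype.card G / p ^ (Fintype.card G).factorization p) *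
      p ^ (Fintype.card G).factorization p = Fintype.card G := by
    rw [mul_comm]
    exact Nat.ordProj_mul_ordCompl_eq_self _ p
  have hn2dvd : p ^ (Fintype.card G).factorization p ∣ Fintype.card G :=
    Nat.ordProj_dvd _ p
  have h1 : 0 < Fintype.card G / p ^ (Fintype.card G).factorization p :=
    Nat.ordCompl_pos p hg0
  have h2 : 0 < p ^ (Fintype.card G).factorization p := pow_pos hp.pos _
  have hco : Nat.Coprime (Fintype.card G / p ^ (Fintype.card G).factorization p)
      (p ^ (Fintype.card G).factorization p) :=
    ((Nat.coprime_ordCompl hp hg0).symm).pow_right _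
  have key := lemS G IH _ _ h1 h2 hco hn2dvd
  have hall : (univ.filter fun x : G =>
      x ^ ((Fintype.card G / p ^ (Fintype.card G).factorization p) *
        p ^ (Fintype.card G).factorization p) = 1) = univ := by
    apply Finset.filter_true_of_mem
    intro x _
    rw [hmul]
    exact pow_card_eq_one
  rw [hall, Finset.card_univ] at key
  have hz2 : p ^ (Fintype.card G).factorization p ∣
      (univ.filter fun u : G =>
        u ^ (Fintype.card G / p ^ (Fintype.card G).factorization p) = 1 ∧
          u ∈ center G).card *
      (univ.filter fun x : G => x ^ (p ^ (Fintype.card G).factorization p) = 1).card := by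
    have h0 : Fintype.card G ≡ 0 [MOD p ^ (Fintype.card G).factorization p] :=
      (Nat.modEq_zero_iff_dvd).mpr hn2dvd
    exact (Nat.modEq_zero_iff_dvd).mp (key.symm.trans h0)
  -- the central coefficient is coprime to p
  have hc : ∀ a b : G, a ∈ center G → Commute a b :=
    fun a b ha => ((Subgroup.mem_center_iff.mp ha) b).symm
  have hpz : ¬ p ∣ (univ.filter fun u : G =>
      u ^ (Fintype.card G / p ^ (Fintype.card G).factorization p) = 1 ∧
        u ∈ center G).card := by
    intro hpdvd
    set K : Subgroup G :=
      { carrier := {u : G |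
          u ^ (Fintype.card G / p ^ (Fintype.card G).factorization p) = 1 ∧
            u ∈ center G}
        one_mem' := ⟨one_pow _, (center G).one_mem⟩
        mul_mem' := by
          intro a b ha hb
          exact ⟨by rw [(hc a b ha.2).mul_pow, ha.1, hb.1, mul_one],
            (center G).mul_mem ha.2 hb.2⟩
        inv_mem' := by
          intro a ha
          exact ⟨by rw [inv_pow, ha.1, inv_one], (center G).inv_mem ha.2⟩ } with hK
    have hKcard : Fintype.card ↥K = (univ.filter fun u : G =>
        u ^ (Fintype.card G / p ^ (Fintype.card G).factorization p) = 1 ∧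
          u ∈ center G).card := by
      apply Fintype.card_of_subtype
      intro x
      simp only [mem_filter, mem_univ, true_and]
      rfl
    haveI := Fact.mk hp
    obtain ⟨x, hx⟩ := exists_prime_orderOf_dvd_card (G := ↥K) p (by
      rw [hKcard]; exact hpdvd)
    obtain ⟨hx1, _⟩ := x.2
    have hordx : orderOf (x : G) = p := by rw [Subgroup.orderOf_coe]; exact hx
    have hpn1 : orderOf (x : G) ∣
        Fintype.card G / p ^ (Fintype.card G).factorization p :=
      orderOf_dvd_of_pow_eq_one hx1
    rw [hordx] at hpn1
    exact Nat.not_dvd_ordCompl hp hg0 hpn1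
  have hcop : Nat.Coprime (p ^ (Fintype.card G).factorization p)
      ((univ.filter fun u : G =>
        u ^ (Fintype.card G / p ^ (Fintype.card G).factorization p) = 1 ∧
          u ∈ center G).card) :=
    Nat.Coprime.pow_left _ ((Nat.Prime.coprime_iff_not_dvd hp).mpr hpz)
  exact hcop.dvd_of_dvd_mul_left hz2

/-- Descent for prime powers: from exponent `c+1` to exponent `c`. -/
private lemma step2 (p c : ℕ) (hp : p.Prime)
    (ih : p ^ (c + 1) ∣ (univ.filter fun x : G => x ^ (p ^ (c + 1)) = 1).card) :
    p ^ c ∣ (univ.filter fun x : G => x ^ (p ^ c) = 1).card := by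
  classical
  have hsplit : (univ.filter fun x : G => x ^ (p ^ (c + 1)) = 1)
      = (univ.filter fun x : G => x ^ (p ^ c) = 1) ∪
        (univ.filter fun x : G => orderOf x = p ^ (c + 1)) := by
    ext x
    simp only [mem_filter, mem_union, mem_univ, true_and]
    constructor
    · intro hx
      have hdvd : orderOf x ∣ p ^ (c + 1) := orderOf_dvd_of_pow_eq_one hx
      obtain ⟨i, hi, hio⟩ := (Nat.dvd_prime_pow hp).mp hdvd
      rcases Nat.lt_or_ge i (c + 1) with hlt | hge
      · left
        apply orderOf_dvd_iff_pow_eq_one.mp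
        rw [hio]
        exact pow_dvd_pow p (by omega)
      · right
        rw [hio]
        congr 1
        omega
    · rintro (hx | hx)
      · rw [pow_succ, pow_mul, hx, one_pow]
      · rw [← hx]
        exact pow_orderOf_eq_one x
  have hdisj : Disjoint (univ.filter fun x : G => x ^ (p ^ c) = 1)
      (univ.filter fun x : G => orderOf x = p ^ (c + 1)) := by
    rw [Finset.disjoint_left]
    intro x hx1 hx2
    simp only [mem_filter, mem_univ, true_and] at hx1 hx2
    have hdvd : orderOf x ∣ p ^ c := orderOf_dvd_of_pow_eq_one hx1
    rw [hx2] at hdvd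
    have hlt : p ^ c < p ^ (c + 1) :=
      Nat.pow_lt_pow_right hp.one_lt (by omega)
    have := Nat.le_of_dvd (pow_pos hp.pos c) hdvd
    omega
  have hcard : (univ.filter fun x : G => x ^ (p ^ (c + 1)) = 1).card
      = (univ.filter fun x : G => x ^ (p ^ c) = 1).card
        + (univ.filter fun x : G => orderOf x = p ^ (c + 1)).card := by
    rw [hsplit, Finset.card_union_of_disjoint hdisj]
  -- p ^ c divides the number of elements of order exactly p ^ (c+1)
  have hE : p ^ c ∣ (univ.filter fun x : G => orderOf x = p ^ (c + 1)).card := by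
    rw [Finset.card_eq_sum_card_fiberwise (f := fun x : G => Subgroup.zpowers x)
      (t := (univ.filter fun x : G => orderOf x = p ^ (c + 1)).image
        fun x => Subgroup.zpowers x)
      (fun x hx => Finset.mem_image_of_mem _ hx)]
    apply Finset.dvd_sum
    intro C hC
    obtain ⟨x0, hx0E, hx0⟩ := Finset.mem_image.mp hC
    simp only [mem_filter, mem_univ, true_and] at hx0E
    haveI : IsCyclic ↥C := hx0 ▸ zpowersIsCyclic x0
    have hcardC : Fintype.card ↥C = p ^ (c + 1) := by
      rw [← hx0, Fintype.card_zpowers, hx0E]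
    have hfiber : ((univ.filter fun x : G => orderOf x = p ^ (c + 1)).filter
        fun x => Subgroup.zpowers x = C).card
        = (univ.filter fun y : ↥C => orderOf y = p ^ (c + 1)).card := by
      refine Finset.card_bij (fun x hx => (⟨x, by
          simp only [mem_filter, mem_univ, true_and] at hx
          rw [← hx.2]
          exact Subgroup.mem_zpowers x⟩ : ↥C)) ?_ ?_ ?_
      · intro x hx
        simp only [mem_filter, mem_univ, true_and] at hx ⊢
        rw [Subgroup.orderOf_mk]
        exact hx.1
      · intro x1 h1 x2 h2 h
        simpa using congrArg Subtype.val h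
      · intro y hy
        simp only [mem_filter, mem_univ, true_and] at hy
        have hord : orderOf (y : G) = p ^ (c + 1) := by
          rw [Subgroup.orderOf_coe]
          exact hy
        have hzy : Subgroup.zpowers (y : G) = C := by
          have hle : Subgroup.zpowers (y : G) ≤ C := Subgroup.zpowers_le.mpr y.2
          apply Subgroup.eq_of_le_of_card_ge hle
          rw [Nat.card_eq_fintype_card, Nat.card_eq_fintype_card, hcardC,
            Fintype.card_zpowers, hord]
        refine ⟨(y : G), ?_, rfl⟩
        simp only [mem_filter, mem_univ, true_and]
        exact ⟨hord, hzy⟩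
    rw [hfiber]
    have htot := IsCyclic.card_orderOf_eq_totient (α := ↥C) (d := p ^ (c + 1))
      (by rw [hcardC])
    rw [htot, Nat.totient_prime_pow hp (Nat.succ_pos c)]
    exact Dvd.intro _ rfl
  have hih : p ^ c ∣ (univ.filter fun x : G => x ^ (p ^ (c + 1)) = 1).card :=
    (pow_dvd_pow p (Nat.le_succ c)).trans ih
  have := Nat.dvd_sub hih hE
  rw [hcard] at this
  simpa using this

end Main

/-- Frobenius's theorem, by strong induction on the order of the group. -/
private theorem frobAux : ∀ (N : ℕ) (G : Type u) [Group G] [Fintype G],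
    Fintype.card G ≤ N → ∀ n : ℕ, 0 < n → n ∣ Fintype.card G →
    n ∣ (univ.filter fun x : G => x ^ n = 1).card := by
  intro N
  induction N using Nat.strong_induction_on with
  | _ N IHN =>
    intro G _ _ hGN
    classical
    have IH : ∀ H : Subgroup G, H ≠ ⊤ → ∀ k : ℕ, 0 < k → k ∣ Fintype.card ↥H →
        k ∣ (univ.filter fun x : ↥H => x ^ k = 1).card := by
      intro H hne k hk hdvd
      have hle : Fintype.card ↥H ≤ Fintype.card G :=
        Fintype.card_le_of_injective _ Subtype.coe_injective
      have hne' : Fintype.card ↥H ≠ Fintype.card G := by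
        intro heq
        apply hne
        apply Subgroup.eq_top_of_card_eq
        rw [Nat.card_eq_fintype_card, Nat.card_eq_fintype_card]
        exact heq
      have hlt : Fintype.card ↥H < N := lt_of_lt_of_le (lt_of_le_of_ne hle hne') hGN
      have h := IHN (Fintype.card ↥H) hlt ↥H le_rfl k hk hdvd
      rwa [Finset.filter_congr_decidable] at h
    -- prime powers
    have hpp : ∀ p k : ℕ, p.Prime → p ^ k ∣ Fintype.card G →
        p ^ k ∣ (univ.filter fun x : G => x ^ (p ^ k) = 1).card := by
      intro p k hp hdvd
      have hk_le : k ≤ (Fintype.card G).factorization p :=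
        (Nat.Prime.pow_dvd_iff_le_factorization hp Fintype.card_ne_zero).mp hdvd
      have key : ∀ j k : ℕ, k + j = (Fintype.card G).factorization p →
          p ^ k ∣ (univ.filter fun x : G => x ^ (p ^ k) = 1).card := by
        intro j
        induction j with
        | zero =>
          intro k hk
          have hk' : k = (Fintype.card G).factorization p := by omega
          subst hk'
          exact step3 G IH p hp
        | succ j ihj =>
          intro k hk
          exact step2 G p k hp (ihj (k + 1) (by omega))
      exact key ((Fintype.card G).factorization p - k) k (by omega)
    -- general n
    intro n
    induction n using Nat.strong_induction_on with
    | _ n ihn =>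
      intro hn hdvd
      rcases eq_or_ne n 1 with rfl | hne1
      · exact one_dvd _
      · have hp : n.minFac.Prime := Nat.minFac_prime hne1
        have hmul : n.minFac ^ n.factorization n.minFac *
            (n / n.minFac ^ n.factorization n.minFac) = n :=
          Nat.ordProj_mul_ordCompl_eq_self n n.minFac
        have hco : Nat.Coprime (n.minFac ^ n.factorization n.minFac)
            (n / n.minFac ^ n.factorization n.minFac) :=
          Nat.Coprime.pow_left _ (Nat.coprime_ordCompl hp hn.ne')
        have ha1 : 1 ≤ n.factorization n.minFac := by
          have hpd : n.minFac ^ 1 ∣ n := by simpa using n.minFac_dvd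
          exact (Nat.Prime.pow_dvd_iff_le_factorization hp hn.ne').mp hpd
        have h1lt : 1 < n.minFac ^ n.factorization n.minFac :=
          Nat.one_lt_pow (by omega) hp.one_lt
        have hpos1 : 0 < n.minFac ^ n.factorization n.minFac := by omega
        rcases eq_or_ne (n / n.minFac ^ n.factorization n.minFac) 1 with h21 | h2ne
        · -- n is a prime power
          rw [← hmul, h21, mul_one] at hdvd ⊢
          exact hpp n.minFac (n.factorization n.minFac) hp hdvd
        · have h2pos : 0 < n / n.minFac ^ n.factorization n.minFac := by
            rcases Nat.eq_zero_or_pos (n / n.minFac ^ n.factorization n.minFac) with h | h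
            · rw [h, mul_zero] at hmul
              omega
            · exact h
          have hn2lt : n / n.minFac ^ n.factorization n.minFac < n :=
            Nat.div_lt_self hn h1lt
          have hn1lt : n.minFac ^ n.factorization n.minFac < n := by
            have h2ge : 2 ≤ n / n.minFac ^ n.factorization n.minFac := by omega
            have hle2 : n.minFac ^ n.factorization n.minFac * 2 ≤ n := by
              calc n.minFac ^ n.factorization n.minFac * 2
                  ≤ n.minFac ^ n.factorization n.minFac *
                    (n / n.minFac ^ n.factorization n.minFac) :=
                  Nat.mul_le_mul_left _ h2ge
                _ = n := hmul
            omega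
          have hdvd1G : n.minFac ^ n.factorization n.minFac ∣ Fintype.card G :=
            dvd_trans ⟨_, hmul.symm⟩ hdvd
          have hdvd2G : (n / n.minFac ^ n.factorization n.minFac) ∣ Fintype.card G :=
            dvd_trans ⟨n.minFac ^ n.factorization n.minFac,
              by rw [mul_comm]; exact hmul.symm⟩ hdvd
          have hfc1 := ihn _ hn1lt hpos1 hdvd1G
          have hfc2 := ihn _ hn2lt h2pos hdvd2G
          have hmod2 := lemS G IH (n.minFac ^ n.factorization n.minFac)
            (n / n.minFac ^ n.factorization n.minFac) hpos1 h2pos hco hdvd2G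
          have d2 : (n / n.minFac ^ n.factorization n.minFac) ∣
              (univ.filter fun x : G => x ^ (n.minFac ^ n.factorization n.minFac *
                (n / n.minFac ^ n.factorization n.minFac)) = 1).card :=
            (Nat.modEq_zero_iff_dvd).mp (hmod2.trans
              ((Nat.modEq_zero_iff_dvd).mpr (Dvd.dvd.mul_left hfc2 _)))
          have hmod1 := lemS G IH (n / n.minFac ^ n.factorization n.minFac)
            (n.minFac ^ n.factorization n.minFac) h2pos hpos1 hco.symm hdvd1G
          have d1 : (n.minFac ^ n.factorization n.minFac) ∣
              (univ.filter fun x : G => x ^ ((n / n.minFac ^ n.factorization n.minFac) *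
                (n.minFac ^ n.factorization n.minFac)) = 1).card :=
            (Nat.modEq_zero_iff_dvd).mp (hmod1.trans
              ((Nat.modEq_zero_iff_dvd).mpr (Dvd.dvd.mul_left hfc1 _)))
          rw [mul_comm (n / n.minFac ^ n.factorization n.minFac)
            (n.minFac ^ n.factorization n.minFac)] at d1
          rw [← hmul]
          exact hco.mul_dvd_of_dvd_of_dvd d1 d2

theorem stmt_10 (G : Type*) [Group G] [Finite G] (n : ℕ) (hn : 0 < n)
    (h : n ∣ Nat.card G) :
    n ∣ Nat.card {x : G | x ^ n = 1} := by
  classical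
  cases nonempty_fintype G
  rw [Nat.card_eq_fintype_card] at h
  have hmain := frobAux (Fintype.card G) G le_rfl n hn h
  have hcard : Nat.card {x : G | x ^ n = 1}
      = (univ.filter fun x : G => x ^ n = 1).card := by
    rw [Nat.card_eq_fintype_card]
    apply Fintype.card_of_subtype
    intro x
    simp
  rwa [hcard]
end

section
/- If p and q are primes with p^m = q^n + 1 for positive integers m, n, then either (p,q,m,n) = (3,2,2,3), or p = 2^n + 1 is a Fermat prime with n a power of 2 (and m = 1, q = 2), or q = 2^m - 1 is a Mersenne prime with m prime (and n = 1, p = 2). -/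
open Finset

lemma aux_pm_one (S : ℤ) (t : ℕ) (hdvd : S ∣ 2 ^ t) (hodd : (S : ZMod 2) ≠ 0) :
    S = 1 ∨ S = -1 := by
  have h1 : S.natAbs ∣ 2 ^ t := by
    have h2 := Int.natAbs_dvd_natAbs.mpr hdvd
    rwa [Int.natAbs_pow] at h2
  obtain ⟨j, hj, hje⟩ := (Nat.dvd_prime_pow Nat.prime_two).mp h1
  have hj0 : j = 0 := by
    by_contra hj0
    have h3 : 2 ∣ S.natAbs := hje ▸ dvd_pow_self 2 hj0
    have h4 : (2 : ℤ) ∣ S := by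
      rw [← Int.dvd_natAbs]
      exact_mod_cast h3
    exact hodd ((ZMod.intCast_zmod_eq_zero_iff_dvd S 2).mpr h4)
  have h5 : S.natAbs = 1 := by simpa [hj0] using hje
  rcases Int.natAbs_eq_iff.mp h5 with h | h
  · exact Or.inl (by exact_mod_cast h)
  · exact Or.inr (by exact_mod_cast h)

theorem stmt_14 (p q m n : ℕ) (hp : p.Prime) (hq : q.Prime)
    (hm : 0 < m) (hn : 0 < n) (h : p ^ m = q ^ n + 1) :
    (p = 3 ∧ q = 2 ∧ m = 2 ∧ n = 3) ∨
    (q = 2 ∧ m = 1 ∧ p = 2 ^ n + 1 ∧ ∃ k : ℕ, n = 2 ^ k) ∨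
    (p = 2 ∧ n = 1 ∧ q = 2 ^ m - 1 ∧ m.Prime) := by
  rcases hq.eq_two_or_odd' with rfl | hqodd
  · -- q = 2
    have hp2 : p ≠ 2 := by
      rintro rfl
      have he : Even (2 ^ m) := (Nat.even_pow).mpr ⟨even_two, hm.ne'⟩
      rw [h] at he
      exact (Nat.even_add_one.mp he) ((Nat.even_pow).mpr ⟨even_two, hn.ne'⟩)
    have hpodd : Odd p := hp.odd_of_ne_two hp2
    have hp3 : 3 ≤ p := by have := hp.two_le; omega
    by_cases hm1 : m = 1
    · subst hm1
      have hp' : p = 2 ^ n + 1 := by simpa using h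
      exact Or.inr (Or.inl ⟨rfl, rfl, hp',
        Nat.pow_of_pow_add_prime one_lt_two hn.ne' (hp' ▸ hp)⟩)
    · left
      have hm2 : 2 ≤ m := by omega
      have hmeven : Even m := by
        by_contra hme
        have hmodd : Odd m := Nat.not_even_iff_odd.mp hme
        set S : ℤ := ∑ i ∈ range m, (p:ℤ)^i with hSdef
        have hgs : S * ((p:ℤ) - 1) = 2 ^ n := by
          rw [hSdef, geom_sum_mul]
          have hc : (p:ℤ)^m = 2^n + 1 := by exact_mod_cast h
          omega
        have hdvd : S ∣ (2:ℤ)^n := ⟨_, hgs.symm⟩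
        have hpz : ((p:ℕ) : ZMod 2) = 1 := by
          rw [← ZMod.natCast_mod p 2, Nat.odd_iff.mp hpodd, Nat.cast_one]
        have hmz : ((m:ℕ) : ZMod 2) = 1 := by
          obtain ⟨t, rfl⟩ := hmodd
          push_cast
          simp [show (2 : ZMod 2) = 0 from rfl]
        have hcast : (S : ZMod 2) = 1 := by
          rw [hSdef]
          push_cast
          simp [hpz, hmz]
        have hge : (1 + (p:ℤ)) ≤ S := by
          have hsub : ∑ i ∈ range 2, (p:ℤ)^i ≤ S := by
            rw [hSdef]
            exact Finset.sum_le_sum_of_subset_of_nonneg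
              (Finset.range_subset_range.mpr hm2) (fun i _ _ => by positivity)
          calc (1 + (p:ℤ)) = ∑ i ∈ range 2, (p:ℤ)^i := by
                simp [Finset.sum_range_succ]
            _ ≤ S := hsub
        have hp3' : (3:ℤ) ≤ (p:ℤ) := by exact_mod_cast hp3
        rcases aux_pm_one S n hdvd (hcast ▸ one_ne_zero) with h1 | h1 <;> omega
      obtain ⟨k, hk⟩ := hmeven
      have hk1 : 1 ≤ k := by omega
      have hx2 : (p^k)^2 = 2^n + 1 := by
        rw [← h, hk, ← pow_mul]; ring_nf
      have hxodd : Odd (p^k) := hpodd.pow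
      have hx3 : 3 ≤ p ^ k := le_trans hp3 (Nat.le_self_pow (by omega : k ≠ 0) p)
      obtain ⟨y, hy⟩ : ∃ y, p ^ k = y + 1 := ⟨p^k - 1, by omega⟩
      have hyeven : 2 ∣ y := by
        have hx := Nat.odd_iff.mp hxodd
        rw [hy] at hx
        omega
      have hprod : y * (y + 2) = 2 ^ n := by
        have hr : (y+1)^2 = y*(y+2) + 1 := by ring
        rw [hy] at hx2
        omega
      obtain ⟨a, ha, hae⟩ := (Nat.dvd_prime_pow Nat.prime_two).mp
        (⟨y + 2, hprod.symm⟩ : y ∣ 2 ^ n)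
      obtain ⟨b, hb, hbe⟩ := (Nat.dvd_prime_pow Nat.prime_two).mp
        (⟨y, by rw [mul_comm]; exact hprod.symm⟩ : y + 2 ∣ 2 ^ n)
      have ha1 : 1 ≤ a := by
        by_contra ha0
        have : a = 0 := by omega
        rw [this, pow_zero] at hae
        omega
      have hy2 : 2 ≤ y := by
        rw [hae]
        calc 2 = 2^1 := rfl
          _ ≤ 2^a := Nat.pow_le_pow_right (by norm_num) ha1
      have hb2 : 2 ≤ b := by
        by_contra hb1
        have : 2^b ≤ 2 := by
          calc 2^b ≤ 2^1 := Nat.pow_le_pow_right (by norm_num) (by omega)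
            _ = 2 := rfl
        omega
      have ha2 : a < 2 := by
        by_contra ha2
        have h4a : 4 ∣ 2^a := by
          have : (2:ℕ)^2 ∣ 2^a := Nat.pow_dvd_pow 2 (by omega)
          simpa using this
        have h4b : 4 ∣ 2^b := by
          have : (2:ℕ)^2 ∣ 2^b := Nat.pow_dvd_pow 2 hb2
          simpa using this
        omega
      have hax : a = 1 := by omega
      have hyval : y = 2 := by rw [hax] at hae; simpa using hae
      have hpk3 : p ^ k = 3 := by omega
      have hpd3 : p ∣ 3 := hpk3 ▸ dvd_pow_self p (by omega : k ≠ 0)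
      have hp3e : p = 3 := (Nat.prime_dvd_prime_iff_eq hp Nat.prime_three).mp hpd3
      have hke : k = 1 := Nat.pow_right_injective (by norm_num : 2 ≤ 3)
        (by show (3:ℕ)^k = 3^1; rw [pow_one]; rw [hp3e] at hpk3; exact hpk3)
      have hme : m = 2 := by omega
      have hne3 : n = 3 := by
        apply Nat.pow_right_injective le_rfl
        have : 2 ^ n = 8 := by
          rw [hp3e, hme] at h
          omega
        simpa using this
      exact ⟨hp3e, rfl, hme, hne3⟩
  · -- q odd
    have hq3 : 3 ≤ q := by
      have h2 := hq.two_le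
      rcases Nat.lt_or_ge q 3 with hq' | hq'
      · interval_cases q
        · exact absurd hqodd (by decide)
      · exact hq'
    have hp2 : p = 2 := by
      have he : Even (p ^ m) := by
        rw [h]
        exact Odd.add_one (hqodd.pow)
      have hep : Even p := ((Nat.even_pow).mp he).1
      exact (Nat.Prime.even_iff hp).mp hep
    subst hp2
    by_cases hn1 : n = 1
    · subst hn1
      rw [pow_one] at h
      have hqe : q = 2 ^ m - 1 := by omega
      have hm1 : m ≠ 1 := by
        rintro rfl
        rw [pow_one] at h
        omega
      refine Or.inr (Or.inr ⟨rfl, rfl, hqe, ?_⟩)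
      have : (2 ^ m - 1).Prime := hqe ▸ hq
      exact (Nat.prime_of_pow_sub_one_prime hm1 this).2
    · exfalso
      have hn2 : 2 ≤ n := by omega
      have hqn : q ^ 2 ≤ q ^ n := Nat.pow_le_pow_right hq.pos hn2
      have hq2ge : 9 ≤ q ^ 2 := by nlinarith
      have hm2 : 2 ≤ m := by
        by_contra hm'
        have : 2^m ≤ 2 := by
          calc 2^m ≤ 2^1 := Nat.pow_le_pow_right (by norm_num) (by omega)
            _ = 2 := rfl
        omega
      rcases Nat.even_or_odd n with hne | hno
      · -- n even : 2^m ≡ 2 mod 4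
        obtain ⟨k, hk⟩ := hne
        have hq4 : q ^ 2 % 4 = 1 := by
          obtain ⟨t, ht⟩ := hqodd
          have : (2*t+1)^2 = 4*(t*t+t)+1 := by ring
          rw [ht]
          omega
        have hqn4 : q ^ n % 4 = 1 := by
          have hn2k : n = 2 * k := by omega
          rw [hn2k, pow_mul, Nat.pow_mod, hq4, one_pow]
          simp
        have h4 : 4 ∣ 2^m := by
          have : (2:ℕ)^2 ∣ 2^m := Nat.pow_dvd_pow 2 hm2
          simpa using this
        omega
      · -- n odd
        set S : ℤ := ∑ i ∈ range n, (-(q:ℤ))^i with hSdef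
        have hgs : S * (-(q:ℤ) - 1) = -((q:ℤ)^n) - 1 := by
          rw [hSdef, geom_sum_mul, hno.neg_pow]
        have hq_int : (q:ℤ)^n + 1 = 2^m := by exact_mod_cast h.symm
        have hgs2 : S * ((q:ℤ) + 1) = 2 ^ m := by
          have hr : S * ((q:ℤ)+1) = -(S * (-(q:ℤ) - 1)) := by ring
          rw [hr, hgs]
          omega
        have hdvd : S ∣ (2:ℤ)^m := ⟨_, hgs2.symm⟩
        have hqz : ((q:ℕ) : ZMod 2) = 1 := by
          rw [← ZMod.natCast_mod q 2, Nat.odd_iff.mp hqodd, Nat.cast_one]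
        have hnz : ((n:ℕ) : ZMod 2) = 1 := by
          obtain ⟨t, rfl⟩ := hno
          push_cast
          simp [show (2 : ZMod 2) = 0 from rfl]
        have hneg : (-1 : ZMod 2) = 1 := rfl
        have hcast : (S : ZMod 2) = 1 := by
          rw [hSdef]
          push_cast
          simp [hqz, hneg, hnz]
        have hq3' : (3:ℤ) ≤ (q:ℤ) := by exact_mod_cast hq3
        have hqn' : (q:ℤ)^2 ≤ (q:ℤ)^n := by exact_mod_cast hqn
        rcases aux_pm_one S m hdvd (hcast ▸ one_ne_zero) with h1 | h1
        · rw [h1, one_mul] at hgs2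
          nlinarith
        · rw [h1] at hgs2
          have hpos : (0:ℤ) < 2^m := by positivity
          omega
end

section
/- There is no power of two q > 2 and prime p with q^2 + 1 = p and p - 2 prime such that q^2 - 3 divides q^4(q^4-1)(q^2-1); more simply: for q a power of 2 with q > 2, neither q^2+3 nor q^2-3 divides q^4(q^4-1)(q^2-1). -/
theorem stmt_15 (f : ℕ) (hf : 2 ≤ f) (q : ℕ) (hq : q = 2 ^ f) :
    ¬ (q ^ 2 + 3 ∣ q ^ 4 * (q ^ 4 - 1) * (q ^ 2 - 1)) ∧
    ¬ (q ^ 2 - 3 ∣ q ^ 4 * (q ^ 4 - 1) * (q ^ 2 - 1)) := by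
  have hq4 : 4 ≤ q := by
    subst hq
    calc (4:ℕ) = 2 ^ 2 := rfl
    _ ≤ 2 ^ f := Nat.pow_le_pow_right (by norm_num) hf
  have hqe : 2 ∣ q := by
    subst hq; exact dvd_pow_self 2 (by omega)
  have h1 : (1:ℕ) ≤ q ^ 4 := Nat.one_le_pow _ _ (by omega)
  have h2 : (1:ℕ) ≤ q ^ 2 := Nat.one_le_pow _ _ (by omega)
  have h3 : (3:ℕ) ≤ q ^ 2 := by nlinarith
  have hodd : ¬ 2 ∣ q ^ 2 + 3 := by
    intro h; rcases hqe with ⟨c, rfl⟩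
    have : (2*c)^2 = 4*c^2 := by ring
    omega
  have hodd' : ¬ 2 ∣ q ^ 2 - 3 := by
    intro h; rcases hqe with ⟨c, rfl⟩
    have : (2*c)^2 = 4*c^2 := by ring
    omega
  have hq2 : 16 ≤ q ^ 2 := by nlinarith
  constructor
  · intro h
    have h' : ((q:ℤ) ^ 2 + 3) ∣ ((q:ℤ) ^ 4 * ((q:ℤ) ^ 4 - 1) * ((q:ℤ) ^ 2 - 1)) := by
      have := Int.natCast_dvd_natCast.mpr h
      push_cast [Nat.cast_sub h1, Nat.cast_sub h2] at this
      convert this using 2 <;> push_cast <;> ring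
    have key : ((q:ℤ) ^ 2 + 3) ∣ ((q:ℤ) ^ 4 * ((q:ℤ) ^ 4 - 1) * ((q:ℤ) ^ 2 - 1) + 288) :=
      ⟨(q:ℤ)^8 - 4*(q:ℤ)^6 + 11*(q:ℤ)^4 - 32*(q:ℤ)^2 + 96, by ring⟩
    have h288 : ((q:ℤ) ^ 2 + 3) ∣ 288 := by
      have := dvd_sub key h'
      simpa using this
    have hN : (q ^ 2 + 3 : ℕ) ∣ 288 := by
      have : ((q ^ 2 + 3 : ℕ) : ℤ) ∣ (288 : ℕ) := by push_cast; exact h288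
      exact_mod_cast this
    have hcop : Nat.Coprime (q ^ 2 + 3) 2 :=
      ((Nat.prime_two.coprime_iff_not_dvd).mpr hodd).symm
    have hcop32 : Nat.Coprime (q ^ 2 + 3) 32 := by
      have : (32:ℕ) = 2 ^ 5 := rfl
      rw [this]; exact hcop.pow_right 5
    have h9 : (q ^ 2 + 3 : ℕ) ∣ 9 := by
      have h288' : (q ^ 2 + 3 : ℕ) ∣ 32 * 9 := by norm_num; exact hN
      exact (Nat.Coprime.dvd_of_dvd_mul_left hcop32 h288')
    have := Nat.le_of_dvd (by norm_num) h9
    omega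
  · intro h
    have h' : ((q:ℤ) ^ 2 - 3) ∣ ((q:ℤ) ^ 4 * ((q:ℤ) ^ 4 - 1) * ((q:ℤ) ^ 2 - 1)) := by
      have := Int.natCast_dvd_natCast.mpr h
      push_cast [Nat.cast_sub h1, Nat.cast_sub h2, Nat.cast_sub h3] at this
      convert this using 2 <;> push_cast <;> ring
    have key : ((q:ℤ) ^ 2 - 3) ∣ ((q:ℤ) ^ 4 * ((q:ℤ) ^ 4 - 1) * ((q:ℤ) ^ 2 - 1) - 144) :=
      ⟨(q:ℤ)^8 + 2*(q:ℤ)^6 + 5*(q:ℤ)^4 + 16*(q:ℤ)^2 + 48, by ring⟩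
    have h144 : ((q:ℤ) ^ 2 - 3) ∣ 144 := by
      have := dvd_sub h' key
      simpa using this
    have hN : (q ^ 2 - 3 : ℕ) ∣ 144 := by
      have : ((q ^ 2 - 3 : ℕ) : ℤ) ∣ (144 : ℕ) := by
        push_cast [Nat.cast_sub h3]; exact h144
      exact_mod_cast this
    have hcop : Nat.Coprime (q ^ 2 - 3) 2 :=
      ((Nat.prime_two.coprime_iff_not_dvd).mpr hodd').symm
    have hcop16 : Nat.Coprime (q ^ 2 - 3) 16 := by
      have : (16:ℕ) = 2 ^ 4 := rfl
      rw [this]; exact hcop.pow_right 4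
    have h9 : (q ^ 2 - 3 : ℕ) ∣ 9 := by
      have h144' : (q ^ 2 - 3 : ℕ) ∣ 16 * 9 := by norm_num; exact hN
      exact (Nat.Coprime.dvd_of_dvd_mul_left hcop16 h144')
    have := Nat.le_of_dvd (by norm_num) h9
    omega
end

section
/- If q is a power of 2 with q > 2, q' is an odd prime power with q' ≡ ±1 (mod 4), and q^2 + 1 = q'(q' ∓ 1)/2, then there is no solution; equivalently, 2q^2 = (q' ± 1)(q' ∓ 2) has no solution with q even and q' odd. -/
theorem stmt_18 (f : ℕ) (hf : 2 ≤ f) (q' : ℤ) (hodd : Odd q') (hpos : 0 < q') :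
    2 * ((2 : ℤ) ^ f) ^ 2 ≠ (q' + 1) * (q' - 2) ∧
    2 * ((2 : ℤ) ^ f) ^ 2 ≠ (q' - 1) * (q' + 2) := by
  obtain ⟨k, hk⟩ := hodd
  have he : 2 * ((2 : ℤ) ^ f) ^ 2 = 2 ^ (2 * f + 1) := by
    rw [pow_add, pow_mul', pow_one]; ring
  have h4 : (4 : ℤ) ≤ 2 ^ f := by
    calc (4 : ℤ) = 2 ^ 2 := by norm_num
    _ ≤ 2 ^ f := pow_le_pow_right₀ (by norm_num) hf
  constructor
  · intro h
    have hd : (q' - 2) ∣ (2 : ℤ) ^ (2 * f + 1) := ⟨q' + 1, by linarith [he, h]⟩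
    have hc : IsCoprime (q' - 2) (2 : ℤ) := ⟨1, -(k - 1), by subst hk; ring⟩
    have hu := Int.isUnit_iff.mp ((IsCoprime.pow_right (n := 2 * f + 1) hc).isUnit_of_dvd hd)
    rcases hu with h1 | h1
    · have hq : q' = 3 := by linarith
      rw [hq] at h; nlinarith [h4]
    · have hq : q' = 1 := by linarith
      rw [hq] at h; nlinarith [h4]
  · intro h
    have hd : (q' + 2) ∣ (2 : ℤ) ^ (2 * f + 1) := ⟨q' - 1, by linarith [he, h]⟩
    have hc : IsCoprime (q' + 2) (2 : ℤ) := ⟨1, -(k + 1), by subst hk; ring⟩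
    have hu := Int.isUnit_iff.mp ((IsCoprime.pow_right (n := 2 * f + 1) hc).isUnit_of_dvd hd)
    rcases hu with h1 | h1
    · have hq : q' = -1 := by linarith
      linarith
    · have hq : q' = -3 := by linarith
      linarith
end
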